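/- arXiv:2302.01879 — 2 statements merged into one kernel-verified Lean document; each statement's English description precedes it below -/
import Mathlib

section
/- Let ℓ₁ = ℝ×{0}×{0}, ℓ₂ = {0}×ℝ×{1/4}, ℓ₃ = {1/4}×{1/4}×ℝ, and let 𝓛 be the union of all integer translates ℓᵢ + ℤ³ for i = 1,2,3. Then any two distinct lines in 𝓛 are at Euclidean distance at least 1/4 from each other. -/
noncomputable section

def ell1 : Set (EuclideanSpace ℝ (Fin 3)) := {x | x 1 = 0 ∧ x 2 = 0}
def ell2 : Set (EuclideanSpace ℝ (Fin 3)) := {x | x 0 = 0 ∧ x 2 = 1 / 4}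
def ell3 : Set (EuclideanSpace ℝ (Fin 3)) := {x | x 0 = 1 / 4 ∧ x 1 = 1 / 4}

/-- The Hedlund family of lines: all `ℤ³`-translates of `ℓ₁, ℓ₂, ℓ₃`. -/
def hedlund : Set (Set (EuclideanSpace ℝ (Fin 3))) :=
  {S | ∃ k : Fin 3 → ℤ,
    S = (fun x => x + (WithLp.toLp 2 (fun j => (k j : ℝ)) : EuclideanSpace ℝ (Fin 3))) '' ell1 ∨
    S = (fun x => x + (WithLp.toLp 2 (fun j => (k j : ℝ)) : EuclideanSpace ℝ (Fin 3))) '' ell2 ∨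
    S = (fun x => x + (WithLp.toLp 2 (fun j => (k j : ℝ)) : EuclideanSpace ℝ (Fin 3))) '' ell3}

lemma image_ell1 (k : Fin 3 → ℤ) :
    (fun x => x + (WithLp.toLp 2 (fun j => (k j : ℝ)) : EuclideanSpace ℝ (Fin 3))) '' ell1
      = {x | x 1 = (k 1 : ℝ) ∧ x 2 = (k 2 : ℝ)} := by
  ext x
  constructor
  · rintro ⟨z, ⟨h1, h2⟩, rfl⟩
    constructor
    · show z 1 + (k 1 : ℝ) = (k 1 : ℝ); rw [h1]; ring
    · show z 2 + (k 2 : ℝ) = (k 2 : ℝ); rw [h2]; ring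
  · rintro ⟨h1, h2⟩
    refine ⟨x - WithLp.toLp 2 (fun j => (k j : ℝ)), ⟨?_, ?_⟩, ?_⟩
    · show x 1 - (k 1 : ℝ) = 0; rw [h1]; ring
    · show x 2 - (k 2 : ℝ) = 0; rw [h2]; ring
    · show x - _ + _ = x; abel

lemma image_ell2 (k : Fin 3 → ℤ) :
    (fun x => x + (WithLp.toLp 2 (fun j => (k j : ℝ)) : EuclideanSpace ℝ (Fin 3))) '' ell2
      = {x | x 0 = (k 0 : ℝ) ∧ x 2 = 1 / 4 + (k 2 : ℝ)} := by
  ext x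
  constructor
  · rintro ⟨z, ⟨h1, h2⟩, rfl⟩
    constructor
    · show z 0 + (k 0 : ℝ) = (k 0 : ℝ); rw [h1]; ring
    · show z 2 + (k 2 : ℝ) = 1 / 4 + (k 2 : ℝ); rw [h2]
  · rintro ⟨h1, h2⟩
    refine ⟨x - WithLp.toLp 2 (fun j => (k j : ℝ)), ⟨?_, ?_⟩, ?_⟩
    · show x 0 - (k 0 : ℝ) = 0; rw [h1]; ring
    · show x 2 - (k 2 : ℝ) = 1 / 4; rw [h2]; ring
    · show x - _ + _ = x; abel

lemma image_ell3 (k : Fin 3 → ℤ) :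
    (fun x => x + (WithLp.toLp 2 (fun j => (k j : ℝ)) : EuclideanSpace ℝ (Fin 3))) '' ell3
      = {x | x 0 = 1 / 4 + (k 0 : ℝ) ∧ x 1 = 1 / 4 + (k 1 : ℝ)} := by
  ext x
  constructor
  · rintro ⟨z, ⟨h1, h2⟩, rfl⟩
    constructor
    · show z 0 + (k 0 : ℝ) = 1 / 4 + (k 0 : ℝ); rw [h1]
    · show z 1 + (k 1 : ℝ) = 1 / 4 + (k 1 : ℝ); rw [h2]
  · rintro ⟨h1, h2⟩
    refine ⟨x - WithLp.toLp 2 (fun j => (k j : ℝ)), ⟨?_, ?_⟩, ?_⟩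
    · show x 0 - (k 0 : ℝ) = 1 / 4; rw [h1]; ring
    · show x 1 - (k 1 : ℝ) = 1 / 4; rw [h2]; ring
    · show x - _ + _ = x; abel

lemma abs_coord_le_dist (x y : EuclideanSpace ℝ (Fin 3)) (i : Fin 3) :
    |x i - y i| ≤ dist x y := by
  rw [EuclideanSpace.dist_eq, ← Real.sqrt_sq_eq_abs]
  apply Real.sqrt_le_sqrt
  have := Finset.single_le_sum (f := fun j => (x j - y j) ^ 2)
    (fun j _ => sq_nonneg _) (Finset.mem_univ i)
  simpa [Real.dist_eq, sq_abs] using this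

lemma key (x y : EuclideanSpace ℝ (Fin 3)) (i : Fin 3)
    (h : (1 / 4 : ℝ) ≤ |x i - y i|) : (1 / 4 : ℝ) ≤ dist x y :=
  h.trans (abs_coord_le_dist x y i)

lemma int_quarter (n : ℤ) : (1 / 4 : ℝ) ≤ |(n : ℝ) - 1 / 4| := by
  rcases le_or_gt n 0 with h | h
  · rw [le_abs]; right
    have : (n : ℝ) ≤ 0 := by exact_mod_cast h
    linarith
  · rw [le_abs]; left
    have : (1 : ℝ) ≤ (n : ℝ) := by exact_mod_cast h
    linarith

lemma qhelp (a b : ℤ) : (1 / 4 : ℝ) ≤ |(a : ℝ) - (1 / 4 + (b : ℝ))| := by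
  have h : (a : ℝ) - (1 / 4 + (b : ℝ)) = ((a - b : ℤ) : ℝ) - 1 / 4 := by push_cast; ring
  rw [h]; exact int_quarter _

lemma qhelp' (a b : ℤ) : (1 / 4 : ℝ) ≤ |(1 / 4 + (a : ℝ)) - (b : ℝ)| := by
  rw [abs_sub_comm]; exact qhelp b a

lemma ihelp (a b : ℤ) (h : a ≠ b) : (1 / 4 : ℝ) ≤ |(a : ℝ) - (b : ℝ)| := by
  have h1 : (1 : ℤ) ≤ |a - b| := Int.one_le_abs (sub_ne_zero.mpr h)
  have h2 : (1 : ℝ) ≤ |(a : ℝ) - (b : ℝ)| := by exact_mod_cast h1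
  linarith

lemma ihelp' (a b : ℤ) (h : a ≠ b) :
    (1 / 4 : ℝ) ≤ |(1 / 4 + (a : ℝ)) - (1 / 4 + (b : ℝ))| := by
  have he : (1 / 4 + (a : ℝ)) - (1 / 4 + (b : ℝ)) = (a : ℝ) - (b : ℝ) := by ring
  rw [he]; exact ihelp a b h

theorem stmt_5 (S T : Set (EuclideanSpace ℝ (Fin 3)))
    (hS : S ∈ hedlund) (hT : T ∈ hedlund) (hne : S ≠ T) :
    ∀ x ∈ S, ∀ y ∈ T, (1 / 4 : ℝ) ≤ dist x y := by
  obtain ⟨k, hk⟩ := hS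
  obtain ⟨m, hm⟩ := hT
  rcases hk with hk | hk | hk
  · rw [image_ell1] at hk
    rcases hm with hm | hm | hm
    · rw [image_ell1] at hm
      subst hk; subst hm
      intro x hx y hy
      obtain ⟨hx1, hx2⟩ := hx
      obtain ⟨hy1, hy2⟩ := hy
      by_cases h1 : k 1 = m 1
      · by_cases h2 : k 2 = m 2
        · exact absurd (by rw [h1, h2]) hne
        · exact key x y 2 (by rw [hx2, hy2]; exact ihelp _ _ h2)
      · exact key x y 1 (by rw [hx1, hy1]; exact ihelp _ _ h1)
    · rw [image_ell2] at hm
      subst hk; subst hm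
      rintro x ⟨hx1, hx2⟩ y ⟨hy1, hy2⟩
      exact key x y 2 (by rw [hx2, hy2]; exact qhelp _ _)
    · rw [image_ell3] at hm
      subst hk; subst hm
      rintro x ⟨hx1, hx2⟩ y ⟨hy1, hy2⟩
      exact key x y 1 (by rw [hx1, hy2]; exact qhelp _ _)
  · rw [image_ell2] at hk
    rcases hm with hm | hm | hm
    · rw [image_ell1] at hm
      subst hk; subst hm
      rintro x ⟨hx1, hx2⟩ y ⟨hy1, hy2⟩
      exact key x y 2 (by rw [hx2, hy2]; exact qhelp' _ _)
    · rw [image_ell2] at hm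
      subst hk; subst hm
      intro x hx y hy
      obtain ⟨hx1, hx2⟩ := hx
      obtain ⟨hy1, hy2⟩ := hy
      by_cases h1 : k 0 = m 0
      · by_cases h2 : k 2 = m 2
        · exact absurd (by rw [h1, h2]) hne
        · exact key x y 2 (by rw [hx2, hy2]; exact ihelp' _ _ h2)
      · exact key x y 0 (by rw [hx1, hy1]; exact ihelp _ _ h1)
    · rw [image_ell3] at hm
      subst hk; subst hm
      rintro x ⟨hx1, hx2⟩ y ⟨hy1, hy2⟩
      exact key x y 0 (by rw [hx1, hy1]; exact qhelp _ _)
  · rw [image_ell3] at hk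
    rcases hm with hm | hm | hm
    · rw [image_ell1] at hm
      subst hk; subst hm
      rintro x ⟨hx1, hx2⟩ y ⟨hy1, hy2⟩
      exact key x y 1 (by rw [hx2, hy1]; exact qhelp' _ _)
    · rw [image_ell2] at hm
      subst hk; subst hm
      rintro x ⟨hx1, hx2⟩ y ⟨hy1, hy2⟩
      exact key x y 0 (by rw [hx1, hy1]; exact qhelp' _ _)
    · rw [image_ell3] at hm
      subst hk; subst hm
      intro x hx y hy
      obtain ⟨hx1, hx2⟩ := hx
      obtain ⟨hy1, hy2⟩ := hy
      by_cases h1 : k 0 = m 0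
      · by_cases h2 : k 1 = m 1
        · exact absurd (by rw [h1, h2]) hne
        · exact key x y 1 (by rw [hx2, hy2]; exact ihelp' _ _ h2)
      · exact key x y 0 (by rw [hx1, hy1]; exact ihelp' _ _ h1)
end
end

section
/- If a Lipschitz path σ : [0,t] → ℝ³ with ‖σ'‖ ≤ 8 a.e. visits the 1/100-neighborhoods of n distinct lines of the Hedlund family 𝓛 in temporal succession (leaving one neighborhood before entering the next), then the time spent outside all 1/100-neighborhoods is at least (n−1)/40, and hence n ≤ 40t + 1. -/
noncomputable section

open scoped ENNReal NNReal

abbrev E3 := EuclideanSpace ℝ (Fin 3)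

def lineA (a b : ℤ) : Set E3 := {y | y 1 = a ∧ y 2 = b}
def lineB (a b : ℤ) : Set E3 := {y | y 0 = a ∧ y 2 = b + 1/4}
def lineC (a b : ℤ) : Set E3 := {y | y 0 = a + 1/4 ∧ y 1 = b + 1/4}

lemma hedlund_char {S : Set E3} (h : S ∈ hedlund) :
    ∃ a b : ℤ, S = lineA a b ∨ S = lineB a b ∨ S = lineC a b := by
  obtain ⟨k, h1 | h2 | h3⟩ := h
  · refine ⟨k 1, k 2, Or.inl ?_⟩
    rw [h1]; ext y
    constructor
    · rintro ⟨x, ⟨hx1, hx2⟩, rfl⟩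
      constructor <;> simp [PiLp.add_apply, hx1, hx2]
    · rintro ⟨hy1, hy2⟩
      refine ⟨y - WithLp.toLp 2 (fun j => (k j : ℝ)), ⟨?_, ?_⟩, sub_add_cancel _ _⟩ <;>
        simp [ell1, PiLp.sub_apply, hy1, hy2]
  · refine ⟨k 0, k 2, Or.inr (Or.inl ?_)⟩
    rw [h2]; ext y
    constructor
    · rintro ⟨x, ⟨hx1, hx2⟩, rfl⟩
      constructor <;> simp [PiLp.add_apply, hx1, hx2] <;> ring
    · rintro ⟨hy1, hy2⟩
      refine ⟨y - WithLp.toLp 2 (fun j => (k j : ℝ)), ⟨?_, ?_⟩, sub_add_cancel _ _⟩ <;>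
        simp [ell2, PiLp.sub_apply, hy1, hy2] <;> ring
  · refine ⟨k 0, k 1, Or.inr (Or.inr ?_)⟩
    rw [h3]; ext y
    constructor
    · rintro ⟨x, ⟨hx1, hx2⟩, rfl⟩
      constructor <;> simp [PiLp.add_apply, hx1, hx2] <;> ring
    · rintro ⟨hy1, hy2⟩
      refine ⟨y - WithLp.toLp 2 (fun j => (k j : ℝ)), ⟨?_, ?_⟩, sub_add_cancel _ _⟩ <;>
        simp [ell3, PiLp.sub_apply, hy1, hy2] <;> ring

lemma coord_le (p q : E3) (j : Fin 3) : |p j - q j| ≤ dist p q := by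
  rw [EuclideanSpace.dist_eq]
  have h1 : |p j - q j| = Real.sqrt ((p j - q j)^2) := (Real.sqrt_sq_eq_abs _).symm
  rw [h1]
  apply Real.sqrt_le_sqrt
  have := Finset.single_le_sum (f := fun i => dist (p i) (q i) ^ 2)
    (fun i _ => sq_nonneg _) (Finset.mem_univ j)
  simpa [Real.dist_eq, sq_abs] using this

lemma quarter_gap (a b : ℤ) : 1/4 ≤ |(a:ℝ) - ((b:ℝ) + 1/4)| := by
  have h : (a:ℝ) - ((b:ℝ) + 1/4) = ((a - b : ℤ) : ℝ) - 1/4 := by push_cast; ring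
  rw [h]
  rcases le_or_gt (a - b) 0 with hm | hm
  · have : ((a - b : ℤ) : ℝ) ≤ 0 := by exact_mod_cast hm
    rw [abs_sub_comm, abs_of_nonneg (by linarith)]; linarith
  · have : (1:ℝ) ≤ ((a - b : ℤ) : ℝ) := by exact_mod_cast hm
    rw [abs_of_nonneg (by linarith)]; linarith

lemma int_gap {a b : ℤ} (h : a ≠ b) : (1:ℝ) ≤ |(a:ℝ) - (b:ℝ)| := by
  have h1 : (1:ℤ) ≤ |a - b| := Int.one_le_abs (sub_ne_zero.mpr h)
  calc (1:ℝ) ≤ ((|a - b| : ℤ) : ℝ) := by exact_mod_cast h1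
    _ = |(a:ℝ) - (b:ℝ)| := by rw [Int.cast_abs]; push_cast; ring_nf

lemma hedlund_sep {S T : Set E3} (hS : S ∈ hedlund) (hT : T ∈ hedlund)
    (hne : S ≠ T) {p q : E3} (hp : p ∈ S) (hq : q ∈ T) : 1/4 ≤ dist p q := by
  obtain ⟨a, b, hS1 | hS2 | hS3⟩ := hedlund_char hS <;>
    obtain ⟨a', b', hT1 | hT2 | hT3⟩ := hedlund_char hT <;>
    subst_vars
  · -- A A
    obtain ⟨hp1, hp2⟩ := hp; obtain ⟨hq1, hq2⟩ := hq
    by_cases ha : a = a'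
    · by_cases hb : b = b'
      · exact absurd (by rw [ha, hb]) hne
      · calc (1:ℝ)/4 ≤ 1 := by norm_num
          _ ≤ |(b:ℝ) - (b':ℝ)| := int_gap hb
          _ = |p 2 - q 2| := by rw [hp2, hq2]
          _ ≤ dist p q := coord_le p q 2
    · calc (1:ℝ)/4 ≤ 1 := by norm_num
        _ ≤ |(a:ℝ) - (a':ℝ)| := int_gap ha
        _ = |p 1 - q 1| := by rw [hp1, hq1]
        _ ≤ dist p q := coord_le p q 1
  · -- A B : coord 2
    calc (1:ℝ)/4 ≤ |(b:ℝ) - ((b':ℝ) + 1/4)| := quarter_gap b b'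
      _ = |p 2 - q 2| := by rw [hp.2, hq.2]
      _ ≤ dist p q := coord_le p q 2
  · -- A C : coord 1
    calc (1:ℝ)/4 ≤ |(a:ℝ) - ((b':ℝ) + 1/4)| := quarter_gap a b'
      _ = |p 1 - q 1| := by rw [hp.1, hq.2]
      _ ≤ dist p q := coord_le p q 1
  · -- B A : coord 2
    calc (1:ℝ)/4 ≤ |(b':ℝ) - ((b:ℝ) + 1/4)| := quarter_gap b' b
      _ = |q 2 - p 2| := by rw [hp.2, hq.2]
      _ = |p 2 - q 2| := abs_sub_comm _ _
      _ ≤ dist p q := coord_le p q 2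
  · -- B B
    obtain ⟨hp1, hp2⟩ := hp; obtain ⟨hq1, hq2⟩ := hq
    by_cases ha : a = a'
    · by_cases hb : b = b'
      · exact absurd (by rw [ha, hb]) hne
      · calc (1:ℝ)/4 ≤ 1 := by norm_num
          _ ≤ |(b:ℝ) - (b':ℝ)| := int_gap hb
          _ = |p 2 - q 2| := by rw [hp2, hq2]; ring_nf
          _ ≤ dist p q := coord_le p q 2
    · calc (1:ℝ)/4 ≤ 1 := by norm_num
        _ ≤ |(a:ℝ) - (a':ℝ)| := int_gap ha
        _ = |p 0 - q 0| := by rw [hp1, hq1]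
        _ ≤ dist p q := coord_le p q 0
  · -- B C : coord 0
    calc (1:ℝ)/4 ≤ |(a:ℝ) - ((a':ℝ) + 1/4)| := quarter_gap a a'
      _ = |p 0 - q 0| := by rw [hp.1, hq.1]
      _ ≤ dist p q := coord_le p q 0
  · -- C A : coord 1
    calc (1:ℝ)/4 ≤ |(a':ℝ) - ((b:ℝ) + 1/4)| := quarter_gap a' b
      _ = |q 1 - p 1| := by rw [hp.2, hq.1]
      _ = |p 1 - q 1| := abs_sub_comm _ _
      _ ≤ dist p q := coord_le p q 1
  · -- C B : coord 0
    calc (1:ℝ)/4 ≤ |(a':ℝ) - ((a:ℝ) + 1/4)| := quarter_gap a' a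
      _ = |q 0 - p 0| := by rw [hp.1, hq.1]
      _ = |p 0 - q 0| := abs_sub_comm _ _
      _ ≤ dist p q := coord_le p q 0
  · -- C C
    obtain ⟨hp1, hp2⟩ := hp; obtain ⟨hq1, hq2⟩ := hq
    by_cases ha : a = a'
    · by_cases hb : b = b'
      · exact absurd (by rw [ha, hb]) hne
      · calc (1:ℝ)/4 ≤ 1 := by norm_num
          _ ≤ |(b:ℝ) - (b':ℝ)| := int_gap hb
          _ = |p 1 - q 1| := by rw [hp2, hq2]; ring_nf
          _ ≤ dist p q := coord_le p q 1
    · calc (1:ℝ)/4 ≤ 1 := by norm_num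
        _ ≤ |(a:ℝ) - (a':ℝ)| := int_gap ha
        _ = |p 0 - q 0| := by rw [hp1, hq1]; ring_nf
        _ ≤ dist p q := coord_le p q 0

lemma hedlund_nonempty {S : Set E3} (hS : S ∈ hedlund) : S.Nonempty := by
  obtain ⟨a, b, h | h | h⟩ := hedlund_char hS <;> subst h
  · exact ⟨WithLp.toLp 2 (![0, a, b] : Fin 3 → ℝ), by constructor <;> simp [lineA]⟩
  · exact ⟨WithLp.toLp 2 (![(a:ℝ), 0, (b:ℝ) + 1/4] : Fin 3 → ℝ), by constructor <;> simp [lineB]⟩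
  · exact ⟨WithLp.toLp 2 (![(a:ℝ) + 1/4, (b:ℝ) + 1/4, 0] : Fin 3 → ℝ), by constructor <;> simp [lineC]⟩

open Metric in
lemma hedlund_unique {S T : Set E3} (hS : S ∈ hedlund) (hT : T ∈ hedlund)
    {x : E3} (h1 : infDist x S ≤ 21/100) (h2 : infDist x T ≤ 1/100) : S = T := by
  by_contra hne
  have h1' : infDist x S < 22/100 := lt_of_le_of_lt h1 (by norm_num)
  have h2' : infDist x T < 2/100 := lt_of_le_of_lt h2 (by norm_num)
  obtain ⟨p, hp, hdp⟩ := (infDist_lt_iff (hedlund_nonempty hS)).mp h1'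
  obtain ⟨q, hq, hdq⟩ := (infDist_lt_iff (hedlund_nonempty hT)).mp h2'
  have := hedlund_sep hS hT hne hp hq
  have : dist p q ≤ dist p x + dist x q := dist_triangle p x q
  have hx : dist p x = dist x p := dist_comm _ _
  linarith [hedlund_sep hS hT hne hp hq]

open Metric Set in
lemma gap_lemma {t : ℝ} {σ : ℝ → E3} (hσ : LipschitzOnWith 8 σ (Set.Icc 0 t))
    {S T : Set E3} (hS : S ∈ hedlund) (hT : T ∈ hedlund) (hne : S ≠ T)
    {u v : ℝ} (hu : u ∈ Set.Icc 0 t) (hv : v ∈ Set.Icc 0 t) (huv : u < v)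
    (h1 : infDist (σ u) S ≤ 1/100) (h2 : infDist (σ v) T ≤ 1/100) :
    ∃ a b : ℝ, u ≤ a ∧ a < b ∧ b ≤ v ∧ 1/40 ≤ b - a ∧
      ∀ s ∈ Set.Ioo a b, ∀ m ∈ hedlund, 1/100 < infDist (σ s) m := by
  -- Lipschitz extension of s ↦ infDist (σ s) S
  have hlip : LipschitzOnWith 8 (fun s => infDist (σ s) S) (Set.Icc 0 t) := by
    have := (lipschitz_infDist_pt S).comp_lipschitzOnWith hσ
    simpa [Function.comp_def] using this
  obtain ⟨G, hG, hGeq⟩ := hlip.extend_real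
  have hIcc : Set.Icc u v ⊆ Set.Icc 0 t := Set.Icc_subset_Icc hu.1 hv.2
  have hGu : G u ≤ 1/100 := by rw [← hGeq hu]; exact h1
  have hGv : 21/100 < G v := by
    rw [← hGeq hv]
    by_contra hc
    exact hne (hedlund_unique hS hT (not_lt.mp hc) h2)
  -- b := first time ≥ 21/100
  set Bset : Set ℝ := {s | s ∈ Set.Icc u v ∧ 21/100 ≤ G s} with hBset
  have hBclosed : IsClosed Bset := by
    apply IsClosed.inter isClosed_Icc
    exact isClosed_le continuous_const hG.continuous
  have hBne : Bset.Nonempty := ⟨v, ⟨le_of_lt huv, le_refl v⟩, le_of_lt hGv⟩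
  have hBbdd : BddBelow Bset := ⟨u, fun s hs => hs.1.1⟩
  set b := sInf Bset with hb
  have hbmem : b ∈ Bset := hBclosed.csInf_mem hBne hBbdd
  have hbu : u < b := by
    rcases lt_or_eq_of_le hbmem.1.1 with h | h
    · exact h
    · exfalso; rw [← h] at hbmem; linarith [hbmem.2]
  -- a := last time ≤ 1/100 before b
  set Aset : Set ℝ := {s | s ∈ Set.Icc u b ∧ G s ≤ 1/100} with hAset
  have hAclosed : IsClosed Aset := by
    apply IsClosed.inter isClosed_Icc
    exact isClosed_le hG.continuous continuous_const
  have hAne : Aset.Nonempty := ⟨u, ⟨le_refl u, le_of_lt hbu⟩, hGu⟩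
  have hAbdd : BddAbove Aset := ⟨b, fun s hs => hs.1.2⟩
  set a := sSup Aset with ha
  have hamem : a ∈ Aset := hAclosed.csSup_mem hAne hAbdd
  have hab : a < b := by
    rcases lt_or_eq_of_le hamem.1.2 with h | h
    · exact h
    · exfalso; rw [h] at hamem; linarith [hamem.2, hbmem.2]
  refine ⟨a, b, hamem.1.1, hab, hbmem.1.2, ?_, ?_⟩
  · -- length bound
    have this : |G b - G a| ≤ 8 * |b - a| := by
      simpa [Real.dist_eq] using hG.dist_le_mul b a
    have hba : |b - a| = b - a := abs_of_pos (by linarith)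
    have hGba : 20/100 ≤ |G b - G a| := by
      have := hbmem.2; have := hamem.2
      rw [abs_of_nonneg (by linarith)]; linarith
    rw [hba] at this
    linarith
  · intro s hs m hm
    have hsuv : s ∈ Set.Icc u v := ⟨le_of_lt (lt_of_le_of_lt hamem.1.1 hs.1),
      le_trans (le_of_lt hs.2) hbmem.1.2⟩
    have hst : s ∈ Set.Icc 0 t := hIcc hsuv
    have hGs1 : 1/100 < G s := by
      by_contra hc
      have : s ∈ Aset := ⟨⟨hsuv.1, le_of_lt hs.2⟩, not_lt.mp hc⟩
      exact absurd (le_csSup hAbdd this) (not_le.mpr hs.1)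
    have hGs2 : G s < 21/100 := by
      by_contra hc
      have : s ∈ Bset := ⟨hsuv, not_lt.mp hc⟩
      exact absurd (csInf_le hBbdd this) (not_le.mpr hs.2)
    have hds : infDist (σ s) S = G s := hGeq hst
    by_cases hmS : m = S
    · rw [hmS, hds]; exact hGs1
    · by_contra hc
      have hle : infDist (σ s) m ≤ 1/100 := not_lt.mp hc
      have h21 : infDist (σ s) S ≤ 21/100 := by rw [hds]; linarith
      exact hmS ((hedlund_unique hS hm h21 hle).symm)

/-- If an `8`-Lipschitz path on `[0, t]` visits the `1/100`-neighborhoods of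
`n` pairwise distinct lines of the Hedlund family at successive times, then it
spends time at least `(n-1)/40` outside all the neighborhoods, and
consequently `n ≤ 40 t + 1`. -/
theorem stmt_17 (t : ℝ) (ht : 0 < t)
    (σ : ℝ → EuclideanSpace ℝ (Fin 3))
    (hσ : LipschitzOnWith 8 σ (Set.Icc 0 t))
    (n : ℕ) (L : Fin n → Set (EuclideanSpace ℝ (Fin 3)))
    (hL : ∀ i, L i ∈ hedlund) (hLinj : Function.Injective L)
    (τ : Fin n → ℝ) (hτmono : StrictMono τ) (hτmem : ∀ i, τ i ∈ Set.Icc 0 t)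
    (hvisit : ∀ i, Metric.infDist (σ (τ i)) (L i) ≤ 1 / 100) :
    ENNReal.ofReal (((n : ℝ) - 1) / 40) ≤
      MeasureTheory.volume
        {s ∈ Set.Icc 0 t | ∀ ℓ ∈ hedlund, 1 / 100 < Metric.infDist (σ s) ℓ} ∧
    (n : ℝ) ≤ 40 * t + 1 := by

  classical
  set Tgt := {s ∈ Set.Icc 0 t | ∀ ℓ ∈ hedlund, 1 / 100 < Metric.infDist (σ s) ℓ} with hTgt
  by_cases hn : n ≤ 1
  · constructor
    · have h1 : (n:ℝ) ≤ 1 := by exact_mod_cast hn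
      have : ((n:ℝ) - 1)/40 ≤ 0 := by linarith
      rw [ENNReal.ofReal_eq_zero.mpr this]
      exact zero_le
    · have h1 : (n:ℝ) ≤ 1 := by exact_mod_cast hn
      linarith
  · push_neg at hn
    have H : ∀ i : Fin (n-1), ∃ a b : ℝ,
        τ ⟨i.1, lt_of_lt_of_le i.2 (Nat.sub_le n 1)⟩ ≤ a ∧ a < b ∧
        b ≤ τ ⟨i.1 + 1, Nat.add_lt_of_lt_sub i.2⟩ ∧ 1/40 ≤ b - a ∧
        ∀ s ∈ Set.Ioo a b, ∀ m ∈ hedlund, 1/100 < Metric.infDist (σ s) m := by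
      intro i
      set i1 : Fin n := ⟨i.1, lt_of_lt_of_le i.2 (Nat.sub_le n 1)⟩
      set i2 : Fin n := ⟨i.1 + 1, Nat.add_lt_of_lt_sub i.2⟩
      have hlt : i1 < i2 := by simp [i1, i2, Fin.lt_def]
      have hneL : L i1 ≠ L i2 := by
        intro h
        have := hLinj h
        rw [Fin.ext_iff] at this
        simp [i1, i2] at this
      exact gap_lemma hσ (hL i1) (hL i2) hneL (hτmem i1) (hτmem i2)
        (hτmono hlt) (hvisit i1) (hvisit i2)
    choose a b ha hab hb hlen hsub using H
    have hτa : ∀ i : Fin (n-1), 0 ≤ a i := fun i =>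
      le_trans (hτmem _).1 (ha i)
    have hbt : ∀ i : Fin (n-1), b i ≤ t := fun i =>
      le_trans (hb i) (hτmem _).2
    -- union of Ioo's is inside the target set
    have hunion : (⋃ i : Fin (n-1), Set.Ioo (a i) (b i)) ⊆ Tgt := by
      rintro s hs
      obtain ⟨i, hi⟩ := Set.mem_iUnion.mp hs
      refine ⟨⟨le_of_lt (lt_of_le_of_lt (hτa i) hi.1),
        le_of_lt (lt_of_lt_of_le hi.2 (hbt i))⟩, fun m hm => hsub i s hi m hm⟩
    -- pairwise disjoint
    have hdisj : Pairwise (Function.onFun Disjoint fun i : Fin (n-1) =>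
        Set.Ioo (a i) (b i)) := by
      have key : ∀ i j : Fin (n-1), i < j → b i ≤ a j := by
        intro i j hij
        calc b i ≤ τ ⟨i.1 + 1, Nat.add_lt_of_lt_sub i.2⟩ := hb i
          _ ≤ τ ⟨j.1, lt_of_lt_of_le j.2 (Nat.sub_le n 1)⟩ := by
              apply hτmono.monotone
              simp [Fin.le_def]
              exact hij
          _ ≤ a j := ha j
      intro i j hij
      rcases lt_or_gt_of_ne hij with h | h
      · exact Set.disjoint_left.mpr fun s hs hs' =>
          absurd (lt_of_le_of_lt (key i j h) hs'.1) (not_lt.mpr (le_of_lt hs.2))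
      · exact Set.disjoint_left.mpr fun s hs hs' =>
          absurd (lt_of_le_of_lt (key j i h) hs.1) (not_lt.mpr (le_of_lt hs'.2))
    have hmeas : MeasureTheory.volume (⋃ i : Fin (n-1), Set.Ioo (a i) (b i)) =
        ∑ i : Fin (n-1), MeasureTheory.volume (Set.Ioo (a i) (b i)) := by
      rw [MeasureTheory.measure_iUnion hdisj (fun i => measurableSet_Ioo)]
      exact tsum_fintype _
    have hlow : ENNReal.ofReal (((n : ℝ) - 1) / 40) ≤ MeasureTheory.volume Tgt := by
      have e1 : ((n:ℝ) - 1)/40 = ((n-1 : ℕ):ℝ) * (1/40) := by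
        rw [Nat.cast_sub (by omega)]; push_cast; ring
      calc ENNReal.ofReal (((n : ℝ) - 1) / 40)
          = ((n-1 : ℕ) : ℝ≥0∞) * ENNReal.ofReal (1/40) := by
            rw [e1, ENNReal.ofReal_mul (by positivity), ENNReal.ofReal_natCast]
        _ = ∑ _i : Fin (n-1), ENNReal.ofReal (1/40) := by
            rw [Finset.sum_const, Finset.card_univ, Fintype.card_fin, nsmul_eq_mul]
        _ ≤ ∑ i : Fin (n-1), MeasureTheory.volume (Set.Ioo (a i) (b i)) := by
            apply Finset.sum_le_sum
            intro i _
            rw [Real.volume_Ioo]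
            exact ENNReal.ofReal_le_ofReal (by linarith [hlen i])
        _ = MeasureTheory.volume (⋃ i : Fin (n-1), Set.Ioo (a i) (b i)) := hmeas.symm
        _ ≤ MeasureTheory.volume Tgt := MeasureTheory.measure_mono hunion
    refine ⟨hlow, ?_⟩
    have hsub2 : Tgt ⊆ Set.Icc 0 t := fun s hs => hs.1
    have hup : MeasureTheory.volume Tgt ≤ ENNReal.ofReal t := by
      calc MeasureTheory.volume Tgt ≤ MeasureTheory.volume (Set.Icc 0 t) :=
            MeasureTheory.measure_mono hsub2
        _ = ENNReal.ofReal t := by rw [Real.volume_Icc, sub_zero]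
    have := le_trans hlow hup
    rw [ENNReal.ofReal_le_ofReal_iff ht.le] at this
    rw [div_le_iff₀ (by norm_num : (0:ℝ) < 40)] at this
    linarith
end
end
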